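/- Let (K, t, c, λ) be a weak mixed distributive law in Cat, with splitting (a, π, σ) of the canonical idempotent on tc, and set η₁ = π ∘ (η ▷ c) : c ⟶ a. Then γ ∘ η₁ = (c ◁ η₁) ∘ δ, where γ = (c π) ∘ (λ c) ∘ (t δ) ∘ σ is the canonical coaction (second diagram of the key Lemma of Böhm–Lack–Street). -/
import Mathlib


open CategoryTheory

universe v₁ u₁ v₂ u₂

variable {K : Type u₁} [Category.{v₁} K]

/-- A weak mixed distributive law `λ : tc ⟶ ct` between a monad `t` and a comonad `c`
on a category `K`, satisfying the four axioms of Böhm–Lack–Street, stated componentwise. -/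
structure WeakMixedDistLaw (t : CategoryTheory.Monad K) (c : CategoryTheory.Comonad K) where
  l : (c.toFunctor ⋙ t.toFunctor) ⟶ (t.toFunctor ⋙ c.toFunctor)
  mul_compat : ∀ X : K, t.μ.app (c.obj X) ≫ l.app X =
    t.map (l.app X) ≫ l.app (t.obj X) ≫ c.map (t.μ.app X)
  comul_compat : ∀ X : K, t.map (c.δ.app X) ≫ l.app (c.obj X) ≫ c.map (l.app X) =
    l.app X ≫ c.δ.app (t.obj X)
  weak_unit : ∀ X : K, t.η.app (c.obj X) ≫ l.app X =
    c.δ.app X ≫ c.map (t.η.app (c.obj X)) ≫ c.map (l.app X) ≫ c.map (c.ε.app (t.obj X))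
  weak_counit : ∀ X : K, l.app X ≫ c.ε.app (t.obj X) =
    t.map (t.η.app (c.obj X)) ≫ t.map (l.app X) ≫ t.map (c.ε.app (t.obj X)) ≫ t.μ.app X

/-- Second diagram of the key Lemma: γ ∘ η₁ = (c η₁) ∘ δ, where η₁ = π ∘ (η c). -/
theorem eta_one_colinear (t : CategoryTheory.Monad K) (c : CategoryTheory.Comonad K)
    (W : WeakMixedDistLaw t c) (a : K ⥤ K) (π : (c.toFunctor ⋙ t.toFunctor) ⟶ a) (σ : a ⟶ (c.toFunctor ⋙ t.toFunctor))
    (hsec : σ ≫ π = 𝟙 a)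
    (hsplit : ∀ X : K, π.app X ≫ σ.app X =
      t.map (c.δ.app X) ≫ W.l.app (c.obj X) ≫ c.ε.app (t.obj (c.obj X))) :
    ∀ X : K,
      (t.η.app (c.obj X) ≫ π.app X) ≫
        (σ.app X ≫ t.map (c.δ.app X) ≫ W.l.app (c.obj X) ≫ c.map (π.app X)) =
      c.δ.app X ≫ c.map (t.η.app (c.obj X) ≫ π.app X) := by
  intro X
  have hsec' : σ.app X ≫ π.app X = 𝟙 (a.obj X) := congrArg (fun f => f.app X) hsec
  have hΘπ : t.map (c.δ.app X) ≫ W.l.app (c.obj X) ≫ c.ε.app (t.obj (c.obj X)) ≫ π.app X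
      = π.app X := by
    have h := hsplit X
    calc t.map (c.δ.app X) ≫ W.l.app (c.obj X) ≫ c.ε.app (t.obj (c.obj X)) ≫ π.app X
        = (t.map (c.δ.app X) ≫ W.l.app (c.obj X) ≫ c.ε.app (t.obj (c.obj X))) ≫ π.app X := by
          simp only [Category.assoc]
      _ = (π.app X ≫ σ.app X) ≫ π.app X := by rw [h]
      _ = π.app X := by rw [Category.assoc, hsec', Category.comp_id]
  have h1 : t.η.app (c.obj X) ≫ t.map (c.δ.app X)
      = c.δ.app X ≫ t.η.app (c.obj (c.obj X)) :=
    (t.η.naturality (c.δ.app X)).symm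
  have h2 : c.ε.app (t.obj (c.obj X)) ≫
        (t.map (c.δ.app X) ≫ W.l.app (c.obj X) ≫ c.map (π.app X))
      = c.map (t.map (c.δ.app X) ≫ W.l.app (c.obj X) ≫ c.map (π.app X)) ≫
        c.ε.app (c.obj (a.obj X)) :=
    (c.ε.naturality (t.map (c.δ.app X) ≫ W.l.app (c.obj X) ≫ c.map (π.app X))).symm
  have h3 : W.l.app (c.obj X) ≫ c.map (t.map (c.δ.app X))
      = t.map (c.map (c.δ.app X)) ≫ W.l.app (c.obj (c.obj X)) :=
    (W.l.naturality (c.δ.app X)).symm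
  have h4 : t.η.app (c.obj (c.obj X)) ≫ t.map (c.map (c.δ.app X))
      = c.map (c.δ.app X) ≫ t.η.app (c.obj (c.obj (c.obj X))) :=
    (t.η.naturality (c.map (c.δ.app X))).symm
  have h5 : c.δ.app X ≫ c.map (c.δ.app X) = c.δ.app X ≫ c.δ.app (c.obj X) :=
    c.coassoc X
  have h6 : c.δ.app (c.obj X) ≫ t.η.app (c.obj (c.obj (c.obj X)))
      = t.η.app (c.obj (c.obj X)) ≫ t.map (c.δ.app (c.obj X)) :=
    t.η.naturality (c.δ.app (c.obj X))
  have h7 : t.map (c.δ.app (c.obj X)) ≫ W.l.app (c.obj (c.obj X)) ≫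
        c.map (W.l.app (c.obj X))
      = W.l.app (c.obj X) ≫ c.δ.app (t.obj (c.obj X)) :=
    W.comul_compat (c.obj X)
  have h8 : c.δ.app (t.obj (c.obj X)) ≫ c.map (c.map (π.app X))
      = c.map (π.app X) ≫ c.δ.app (a.obj X) :=
    (c.δ.naturality (π.app X)).symm
  have h9 : c.δ.app (a.obj X) ≫ c.ε.app (c.obj (a.obj X)) = 𝟙 (c.obj (a.obj X)) :=
    c.left_counit (a.obj X)
  have h10 : t.η.app (c.obj (c.obj X)) ≫ W.l.app (c.obj X)
      = c.δ.app (c.obj X) ≫ c.map (t.η.app (c.obj (c.obj X))) ≫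
        c.map (W.l.app (c.obj X)) ≫ c.map (c.ε.app (t.obj (c.obj X))) :=
    W.weak_unit (c.obj X)
  have hbig : c.δ.app X ≫ t.η.app (c.obj (c.obj X)) ≫ W.l.app (c.obj X) ≫
        c.ε.app (t.obj (c.obj X)) ≫ π.app X = t.η.app (c.obj X) ≫ π.app X := by
    slice_lhs 1 2 => rw [← h1]
    simp only [Category.assoc]
    rw [hΘπ]
  slice_lhs 2 3 => rw [hsplit X]
  slice_lhs 1 2 => rw [h1]
  slice_lhs 4 7 => rw [h2]
  simp only [Functor.map_comp, Category.assoc]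
  slice_lhs 3 4 => rw [h3]
  slice_lhs 2 3 => rw [h4]
  slice_lhs 1 2 => rw [h5]
  slice_lhs 2 3 => rw [h6]
  slice_lhs 3 5 => rw [h7]
  slice_lhs 4 5 => rw [h8]
  slice_lhs 5 6 => rw [h9]
  simp only [Category.comp_id, Category.id_comp, Category.assoc]
  slice_lhs 2 3 => rw [h10]
  slice_lhs 1 2 => rw [← h5]
  have hfin : c.map (c.δ.app X) ≫ c.map (t.η.app (c.obj (c.obj X))) ≫
        c.map (W.l.app (c.obj X)) ≫ c.map (c.ε.app (t.obj (c.obj X))) ≫ c.map (π.app X)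
      = c.map (t.η.app (c.obj X)) ≫ c.map (π.app X) := by
    simpa only [Functor.map_comp, Category.assoc] using congrArg c.toFunctor.map hbig
  slice_lhs 2 6 => rw [hfin]
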